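/- (Sufficiency in the Multi-Robot Stability Condition Lemma.) Fix N ≥ 1 robots as in the context, with common period T > 0 such that T/T_r ∈ ℕ for every r. If Σ_{r=1}^N c_r·τ_r/T_r > p, then for every accumulation function Z there exists a finite time t̄ such that Z(t) ≤ T·Σ_{r=1}^N c_r for all t ≥ t̄; in particular limsup_{t→∞} Z(t) ≤ T·Σ_{r=1}^N c_r. -/

import Mathlib

open MeasureTheory Filter Set

/-- Total consumption rate at time `t`: the sum of `c_r` over the robots whose footprint
currently covers the point of interest, i.e. those with `θ_r(t) ∈ F_r`. -/
noncomputable def totalConsumption (N : ℕ) (F : Fin N → Set ℝ) (c : Fin N → ℝ)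
    (θ : Fin N → ℝ → ℝ) (t : ℝ) : ℝ :=
  ∑ r : Fin N, (F r).indicator (fun _ => c r) (θ r t)

/-- A multi-robot accumulation function: a locally absolutely continuous nonnegative
function `Z` (written as the integral of a locally integrable derivative `g`) such that
a.e. `Z' = p − C(t)` when `Z > 0` and `Z' = max (p − C(t)) 0` when `Z = 0`, where `C` is
the total consumption rate. -/
def IsMultiAccumulation (N : ℕ) (F : Fin N → Set ℝ) (c : Fin N → ℝ)
    (θ : Fin N → ℝ → ℝ) (p : ℝ) (Z : ℝ → ℝ) : Prop :=
  (∀ t : ℝ, 0 ≤ Z t) ∧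
  ∃ g : ℝ → ℝ, MeasureTheory.LocallyIntegrable g MeasureTheory.volume ∧
    (∀ a b : ℝ, Z b - Z a = ∫ s in a..b, g s) ∧
    (∀ᵐ t : ℝ, (0 < Z t → g t = p - totalConsumption N F c θ t) ∧
      (Z t = 0 → g t = max (p - totalConsumption N F c θ t) 0))

set_option maxHeartbeats 1000000 in
/-- Sufficiency in the multi-robot stability condition lemma: if
`Σ_r c_r·τ_r/T_r > p` then every multi-robot accumulation function is eventually
bounded by `T·Σ_r c_r`, where `T` is a common period of all the robots. -/
theorem multirobot_stability_sufficiency (N : ℕ) (hN : 1 ≤ N)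
    (F : Fin N → Set ℝ) (hF : ∀ r, MeasurableSet (F r))
    (c : Fin N → ℝ) (hc : ∀ r, 0 < c r)
    (θ : Fin N → ℝ → ℝ) (hθ : ∀ r t, θ r t ∈ Set.Icc (0 : ℝ) 1)
    (Tr : Fin N → ℝ) (hTr : ∀ r, 0 < Tr r)
    (hper : ∀ r t, θ r (t + Tr r) = θ r t)
    (τ : Fin N → ℝ) (hτ : ∀ r, 0 ≤ τ r)
    (hcov : ∀ r, ∀ t : ℝ,
      (∫ s in t..(t + Tr r), (F r).indicator (fun _ => (1 : ℝ)) (θ r s)) = τ r)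
    (p : ℝ) (hp : 0 < p)
    (T : ℝ) (hT : 0 < T) (hcommon : ∀ r, ∃ k : ℕ, T = (k : ℝ) * Tr r)
    (hstab : p < ∑ r, c r * (τ r / Tr r))
    (Z : ℝ → ℝ) (hZ : IsMultiAccumulation N F c θ p Z) :
    ∃ tbar : ℝ, (∀ t : ℝ, tbar ≤ t → Z t ≤ T * ∑ r, c r) ∧
      Filter.limsup Z Filter.atTop ≤ T * ∑ r, c r := by
  classical
  obtain ⟨hZnn, g, hgloc, hint, hae⟩ := hZ
  set C := totalConsumption N F c θ with hC
  set f : Fin N → ℝ → ℝ := fun r s => (F r).indicator (fun _ => (1 : ℝ)) (θ r s) with hf'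
  have hcov' : ∀ r, ∀ t : ℝ, (∫ s in t..(t + Tr r), f r s) = τ r := hcov
  have hf01 : ∀ r s, 0 ≤ f r s ∧ f r s ≤ 1 := by
    intro r s
    by_cases h : θ r s ∈ F r <;>
      simp [hf', Set.indicator_of_mem, Set.indicator_of_notMem, h]
  have hCsum : ∀ s, C s = ∑ r, c r * f r s := by
    intro s
    simp only [hC, totalConsumption, hf']
    refine Finset.sum_congr rfl fun r _ => ?_
    by_cases h : θ r s ∈ F r <;>
      simp [Set.indicator_of_mem, Set.indicator_of_notMem, h]
  have hCnn : ∀ s, 0 ≤ C s := fun s => by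
    rw [hCsum]
    exact Finset.sum_nonneg fun r _ => mul_nonneg (hc r).le (hf01 r s).1
  have hgint : ∀ a b : ℝ, IntervalIntegrable g volume a b := fun a b =>
    intervalIntegrable_iff.2
      ((hgloc.integrableOn_isCompact isCompact_uIcc).mono_set Set.uIoc_subset_uIcc)
  -- continuity of Z
  have hZcont : Continuous Z := by
    have hZeq : Z = fun t => Z 0 + ∫ s in (0:ℝ)..t, g s := by
      funext t
      have := hint 0 t
      linarith
    rw [hZeq]
    exact continuous_const.add (intervalIntegral.continuous_primitive hgint 0)
  -- per-robot integral over k periods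
  have hfper : ∀ r (k : ℕ) (a : ℝ), IntervalIntegrable (f r) volume a (a + k * Tr r) →
      (∫ s in a..(a + k * Tr r), f r s) = k * τ r := by
    intro r k
    induction k with
    | zero => intro a _; simp
    | succ k ih =>
      intro a hint'
      have hk0 : (0:ℝ) ≤ (k : ℝ) * Tr r := mul_nonneg (Nat.cast_nonneg k) (hTr r).le
      have he : a + ((k : ℕ) + 1 : ℕ) * Tr r = (a + (k : ℝ) * Tr r) + Tr r := by
        push_cast; ring
      rw [he] at hint' ⊢
      have hTrle := (hTr r).le
      have hmem1 : a ∈ Set.uIcc a ((a + (k : ℝ) * Tr r) + Tr r) := Set.left_mem_uIcc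
      have hmem2 : a + (k : ℝ) * Tr r ∈ Set.uIcc a ((a + (k : ℝ) * Tr r) + Tr r) := by
        rw [Set.mem_uIcc]; left; constructor <;> linarith
      have hmem3 : (a + (k : ℝ) * Tr r) + Tr r ∈ Set.uIcc a ((a + (k : ℝ) * Tr r) + Tr r) :=
        Set.right_mem_uIcc
      have h1 : IntervalIntegrable (f r) volume a (a + (k : ℝ) * Tr r) :=
        hint'.mono_set (Set.uIcc_subset_uIcc hmem1 hmem2)
      have h2 : IntervalIntegrable (f r) volume (a + (k : ℝ) * Tr r)
          ((a + (k : ℝ) * Tr r) + Tr r) :=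
        hint'.mono_set (Set.uIcc_subset_uIcc hmem2 hmem3)
      rw [← intervalIntegral.integral_add_adjacent_intervals h1 h2, ih a h1,
        hcov' r (a + (k : ℝ) * Tr r)]
      push_cast
      ring
  have hfint_or : ∀ r (k : ℕ) (a : ℝ),
      IntervalIntegrable (f r) volume a (a + k * Tr r) ∨ τ r = 0 := by
    intro r k a
    induction k with
    | zero =>
      left
      simpa using IntervalIntegrable.refl (f := f r) (μ := volume) (a := a)
    | succ k ih =>
      rcases ih with h | h
      · by_cases h2 : IntervalIntegrable (f r) volume (a + (k : ℝ) * Tr r)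
            ((a + (k : ℝ) * Tr r) + Tr r)
        · left
          have he : a + ((k : ℕ) + 1 : ℕ) * Tr r = (a + (k : ℝ) * Tr r) + Tr r := by
            push_cast; ring
          rw [he]
          exact h.trans h2
        · right
          rw [← hcov' r (a + (k : ℝ) * Tr r)]
          exact intervalIntegral.integral_undef h2
      · right; exact h
  -- the key decrease lemma over one common period
  have hdrop : ∀ a : ℝ, (∀ u ∈ Set.Ioo a (a + T), 0 < Z u) →
      Z (a + T) - Z a ≤ (p - ∑ r, c r * (τ r / Tr r)) * T := by
    intro a hpos
    set S : Finset (Fin N) :=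
      Finset.univ.filter (fun r => IntervalIntegrable (f r) volume a (a + T)) with hS
    set φ : ℝ → ℝ := fun s => ∑ r ∈ S, c r * f r s with hφ
    have hmemS : ∀ r ∈ S, IntervalIntegrable (f r) volume a (a + T) := by
      intro r hr; exact (Finset.mem_filter.1 hr).2
    have hsumint : ∀ u : Finset (Fin N), (∀ r ∈ u, IntervalIntegrable (f r) volume a (a + T)) →
        IntervalIntegrable (fun s => ∑ r ∈ u, c r * f r s) volume a (a + T) := by
      intro u
      induction u using Finset.induction_on with
      | empty => intro _; simpa using intervalIntegrable_const (c := (0:ℝ))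
      | insert _ _ hx ih =>
        intro h
        simp_rw [Finset.sum_insert hx]
        exact ((h _ (Finset.mem_insert_self _ _)).const_mul _).add
          (ih fun r hr => h r (Finset.mem_insert_of_mem hr))
    have hφint : IntervalIntegrable φ volume a (a + T) := hsumint S hmemS
    have hφval : (∫ s in a..(a + T), φ s) = (∑ r, c r * (τ r / Tr r)) * T := by
      rw [hφ]
      rw [intervalIntegral.integral_finset_sum
        (fun r hr => (hmemS r hr).const_mul (c r))]
      have hterm : ∀ r ∈ S, (∫ s in a..(a + T), c r * f r s) = c r * (τ r / Tr r) * T := by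
        intro r hr
        obtain ⟨k, hk⟩ := hcommon r
        have hTr' : Tr r ≠ 0 := (hTr r).ne'
        have hint2 : IntervalIntegrable (f r) volume a (a + (k : ℝ) * Tr r) := by
          rw [← hk]; exact hmemS r hr
        rw [intervalIntegral.integral_const_mul, hk, hfper r k a hint2]
        field_simp
      rw [Finset.sum_congr rfl hterm, ← Finset.sum_mul]
      congr 1
      apply Finset.sum_subset (Finset.subset_univ S)
      intro r _ hr
      obtain ⟨k, hk⟩ := hcommon r
      rcases hfint_or r k a with h | h
      · exfalso
        apply hr
        rw [hS, Finset.mem_filter]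
        exact ⟨Finset.mem_univ r, by rwa [hk]⟩
      · rw [h]; simp
    have hφleC : ∀ s, φ s ≤ C s := by
      intro s
      rw [hCsum, hφ]
      exact Finset.sum_le_sum_of_subset_of_nonneg (Finset.subset_univ S)
        (fun r _ _ => mul_nonneg (hc r).le (hf01 r s).1)
    have hnull : ∀ᵐ s : ℝ, s ∉ ({a, a + T} : Set ℝ) :=
      measure_eq_zero_iff_ae_notMem.1 ((Set.toFinite _).measure_zero volume)
    have hae2 : g ≤ᵐ[volume.restrict (Set.Icc a (a + T))] fun s => p - φ s := by
      refine (MeasureTheory.ae_restrict_iff' measurableSet_Icc).2 ?_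
      filter_upwards [hnull, hae] with s hs1 hs2
      intro hmem
      have hsa : s ≠ a := fun h => hs1 (by simp [h])
      have hsb : s ≠ a + T := fun h => hs1 (by simp [h])
      have hso : s ∈ Set.Ioo a (a + T) :=
        ⟨lt_of_le_of_ne hmem.1 (fun h => hsa h.symm), lt_of_le_of_ne hmem.2 hsb⟩
      have hgeq := hs2.1 (hpos s hso)
      rw [hgeq]
      have := hφleC s
      linarith
    have hab : a ≤ a + T := by linarith
    have hmain := intervalIntegral.integral_mono_ae_restrict hab (hgint a (a + T))
      (intervalIntegrable_const.sub hφint) hae2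
    have hcalc : (∫ s in a..(a + T), (p - φ s)) = (p - ∑ r, c r * (τ r / Tr r)) * T := by
      rw [intervalIntegral.integral_sub intervalIntegrable_const hφint,
        intervalIntegral.integral_const, hφval]
      simp only [smul_eq_mul]
      ring
    rw [hint a (a + T)]
    exact hmain.trans_eq hcalc
  -- upper bound lemma: accumulation grows at most at rate p when positive
  have hupper : ∀ a b : ℝ, a ≤ b → (∀ u ∈ Set.Ioo a b, 0 < Z u) →
      Z b - Z a ≤ p * (b - a) := by
    intro a b hab hpos
    have hnull : ∀ᵐ s : ℝ, s ∉ ({a, b} : Set ℝ) :=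
      measure_eq_zero_iff_ae_notMem.1 ((Set.toFinite _).measure_zero volume)
    have hae2 : g ≤ᵐ[volume.restrict (Set.Icc a b)] fun _ => p := by
      refine (MeasureTheory.ae_restrict_iff' measurableSet_Icc).2 ?_
      filter_upwards [hnull, hae] with s hs1 hs2
      intro hmem
      have hsa : s ≠ a := fun h => hs1 (by simp [h])
      have hsb : s ≠ b := fun h => hs1 (by simp [h])
      have hso : s ∈ Set.Ioo a b :=
        ⟨lt_of_le_of_ne hmem.1 (fun h => hsa h.symm), lt_of_le_of_ne hmem.2 hsb⟩
      have hgeq := hs2.1 (hpos s hso)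
      rw [hgeq]
      have := hCnn s
      linarith
    have hmain := intervalIntegral.integral_mono_ae_restrict hab (hgint a b)
      intervalIntegrable_const hae2
    rw [hint a b]
    refine hmain.trans_eq ?_
    rw [intervalIntegral.integral_const]
    simp [smul_eq_mul, mul_comm]
  -- τ r ≤ Tr r
  have hτle : ∀ r, τ r ≤ Tr r := by
    intro r
    by_cases h : IntervalIntegrable (f r) volume 0 (0 + Tr r)
    · rw [← hcov' r 0]
      have h1 : (∫ s in (0:ℝ)..(0 + Tr r), f r s) ≤ ∫ s in (0:ℝ)..(0 + Tr r), (1:ℝ) :=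
        intervalIntegral.integral_mono_on (by linarith [hTr r]) h intervalIntegrable_const
          (fun x _ => (hf01 r x).2)
      have h2 : (∫ s in (0:ℝ)..(0 + Tr r), (1:ℝ)) = Tr r := by simp
      linarith
    · rw [← hcov' r 0, intervalIntegral.integral_undef h]
      exact (hTr r).le
  have hpsum : p ≤ ∑ r, c r := by
    refine hstab.le.trans (Finset.sum_le_sum fun r _ => ?_)
    have h1 : τ r / Tr r ≤ 1 := (div_le_one (hTr r)).2 (hτle r)
    calc c r * (τ r / Tr r) ≤ c r * 1 := mul_le_mul_of_nonneg_left h1 (hc r).le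
      _ = c r := mul_one _
  have hδ : 0 < (∑ r, c r * (τ r / Tr r)) - p := by linarith
  have hsumnn : 0 ≤ ∑ r, c r := Finset.sum_nonneg fun r _ => (hc r).le
  -- existence of a zero of Z in [0, ∞)
  have hexzero : ∃ s : ℝ, 0 ≤ s ∧ Z s = 0 := by
    by_contra hcon
    push_neg at hcon
    have hpos : ∀ s : ℝ, 0 ≤ s → 0 < Z s := fun s hs =>
      lt_of_le_of_ne (hZnn s) (Ne.symm (hcon s hs))
    have hiter : ∀ n : ℕ, Z (n * T) ≤ Z 0 - n * (((∑ r, c r * (τ r / Tr r)) - p) * T) := by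
      intro n
      induction n with
      | zero => simp
      | succ n ih =>
        have hnT : (0:ℝ) ≤ n * T := mul_nonneg (Nat.cast_nonneg n) hT.le
        have hstep := hdrop ((n : ℝ) * T) (fun u hu => hpos u (by linarith [hu.1]))
        have he : (((n : ℕ) + 1 : ℕ) : ℝ) * T = (n : ℝ) * T + T := by push_cast; ring
        rw [he]
        push_cast
        push_cast at ih
        linarith
    obtain ⟨n, hn⟩ := exists_nat_gt (Z 0 / ((((∑ r, c r * (τ r / Tr r)) - p) * T)))
    have hpos2 : 0 < ((∑ r, c r * (τ r / Tr r)) - p) * T := mul_pos hδ hT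
    have h2 : Z 0 < n * (((∑ r, c r * (τ r / Tr r)) - p) * T) := by
      rwa [div_lt_iff₀ hpos2] at hn
    have h3 := hiter n
    have h4 := hZnn (n * T)
    linarith
  obtain ⟨s0, hs0nn, hs0⟩ := hexzero
  -- main bound for t ≥ s0
  have hbound : ∀ t : ℝ, s0 ≤ t → Z t ≤ T * ∑ r, c r := by
    intro t ht
    rcases eq_or_lt_of_le (hZnn t) with h0 | h0
    · rw [← h0]
      exact mul_nonneg hT.le hsumnn
    · set A : Set ℝ := Set.Icc s0 t ∩ Z ⁻¹' {0} with hA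
      have hAne : A.Nonempty := ⟨s0, ⟨le_refl _, ht⟩, hs0⟩
      have hAbdd : BddAbove A := ⟨t, fun u hu => hu.1.2⟩
      have hAcl : IsClosed A := isClosed_Icc.inter (isClosed_singleton.preimage hZcont)
      have ha0 := hAcl.csSup_mem hAne hAbdd
      set a0 := sSup A with ha0def
      obtain ⟨⟨ha0s, ha0t⟩, ha0z⟩ := ha0
      have hZa0 : Z a0 = 0 := ha0z
      have hposafter : ∀ u, a0 < u → u ≤ t → 0 < Z u := by
        intro u h1 h2
        rcases eq_or_lt_of_le (hZnn u) with h3 | h3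
        · exfalso
          have hmem : u ∈ A := ⟨⟨ha0s.trans h1.le, h2⟩, h3.symm⟩
          exact absurd (le_csSup hAbdd hmem) (not_le.2 h1)
        · exact h3
      set m := ⌊(t - a0) / T⌋₊ with hm
      set ρ := t - a0 - m * T with hρ
      have hta0 : 0 ≤ t - a0 := by linarith
      have hmle : (m : ℝ) * T ≤ t - a0 := by
        have h1 := Nat.floor_le (div_nonneg hta0 hT.le)
        rw [hm]
        exact (le_div_iff₀ hT).1 h1
      have hρ0 : 0 ≤ ρ := by rw [hρ]; linarith
      have hρT : ρ < T := by
        have h1 := Nat.lt_floor_add_one ((t - a0) / T)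
        have h2 : t - a0 < ((m : ℝ) + 1) * T := by
          rw [hm]
          exact (div_lt_iff₀ hT).1 (by exact_mod_cast h1)
        have h3 : ((m : ℝ) + 1) * T = m * T + T := by ring
        rw [hρ]
        linarith
      have hmT : (0:ℝ) ≤ m * T := mul_nonneg (Nat.cast_nonneg m) hT.le
      have haρt : a0 + ρ ≤ t := by rw [hρ]; linarith
      have hstep0 : Z (a0 + ρ) ≤ p * ρ := by
        have h1 := hupper a0 (a0 + ρ) (by linarith)
          (fun u hu => hposafter u hu.1 (le_trans hu.2.le haρt))
        rw [hZa0] at h1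
        linarith
      have hδT : (p - ∑ r, c r * (τ r / Tr r)) * T ≤ 0 := by
        have := mul_pos hδ hT
        nlinarith
      have hiter2 : ∀ k : ℕ, k ≤ m → Z (a0 + ρ + k * T) ≤ p * ρ := by
        intro k
        induction k with
        | zero => intro _; simpa using hstep0
        | succ k ih =>
          intro hk
          have hk' : k ≤ m := Nat.le_of_succ_le hk
          have hkT : ((k : ℝ) + 1) ≤ (m : ℝ) := by exact_mod_cast hk
          have hkTnn : (0:ℝ) ≤ (k : ℝ) * T := mul_nonneg (Nat.cast_nonneg k) hT.le
          have hteq : a0 + ρ + (m : ℝ) * T = t := by rw [hρ]; ring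
          have hmul := mul_le_mul_of_nonneg_right hkT hT.le
          have hb : a0 + ρ + ((k : ℝ) + 1) * T ≤ t := by nlinarith
          have hdrop' := hdrop (a0 + ρ + (k : ℝ) * T) (fun u hu => by
            refine hposafter u (by linarith [hu.1]) ?_
            have := hu.2
            linarith)
          have he : (((k : ℕ) + 1 : ℕ) : ℝ) * T = (k : ℝ) * T + T := by push_cast; ring
          rw [he, ← add_assoc]
          have hih := ih hk'
          have heq2 : a0 + ρ + (k : ℝ) * T + T = (a0 + ρ + (k : ℝ) * T) + T := by ring
          rw [heq2]
          linarith
      have hteq : a0 + ρ + (m : ℝ) * T = t := by rw [hρ]; ring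
      have hfinal := hiter2 m le_rfl
      rw [hteq] at hfinal
      have h1 : p * ρ ≤ p * T := mul_le_mul_of_nonneg_left hρT.le hp.le
      have h2 : p * T ≤ (∑ r, c r) * T := mul_le_mul_of_nonneg_right hpsum hT.le
      calc Z t ≤ p * ρ := hfinal
        _ ≤ T * ∑ r, c r := by rw [mul_comm T]; linarith
  have hev : ∀ᶠ t : ℝ in Filter.atTop, Z t ≤ T * ∑ r, c r := by
    filter_upwards [Filter.eventually_ge_atTop s0] with t ht using hbound t ht
  exact ⟨s0, hbound, Filter.limsup_le_of_le
    (Filter.isCoboundedUnder_le_of_le Filter.atTop (x := 0) hZnn) hev⟩
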